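/- Let U ⊆ O be open, let f : ℂ × ℂ → ℂ be holomorphic on U, let n ∈ ℕ, and let (z,w) ∈ U. Then the pure Peschl–Minda derivative is globally linearised by the coordinate change Ψ₊(z,w) = (z/(1−z·w), w): D^{n,0} f(z,w) = (1 − z·w)^{−n} · iteratedDeriv n (fun u => f (u/(1 + u·w), w)) (z/(1 − z·w)). (Note that u/(1+u·w) = z when u = z/(1−z·w), so the iterated derivative only uses values of f near (z,w).) -/

import Mathlib

open Topology

/-- Unconditional chain rule for `deriv` with a nonzero scaling, in a field. -/
lemma deriv_comp_const_mul_ne_zero {𝕜 : Type*} [NontriviallyNormedField 𝕜]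
    (f : 𝕜 → 𝕜) {c : 𝕜} (hc : c ≠ 0) (x : 𝕜) :
    deriv (fun y => f (c * y)) x = c * deriv f (c * x) := by
  by_cases hf : DifferentiableAt 𝕜 f (c * x)
  · have h1 : HasDerivAt (fun y : 𝕜 => c * y) c x := by
      simpa using (hasDerivAt_id x).const_mul c
    have := (hf.hasDerivAt.comp x h1)
    simpa [mul_comm, Function.comp_def] using this.deriv
  · have hg : ¬ DifferentiableAt 𝕜 (fun y => f (c * y)) x := by
      intro h
      apply hf
      have h1 : HasDerivAt (fun y : 𝕜 => c⁻¹ * y) c⁻¹ (c * x) := by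
        simpa using (hasDerivAt_id (c * x)).const_mul c⁻¹
      have h2 : HasDerivAt (fun y => f (c * y)) (deriv (fun y => f (c * y)) x)
          (c⁻¹ * (c * x)) := by
        rw [inv_mul_cancel_left₀ hc]; exact h.hasDerivAt
      have := (h2.comp (c * x) h1)
      have heq : (fun y => f (c * (c⁻¹ * y))) = f := by
        funext y; rw [← mul_assoc, mul_inv_cancel₀ hc, one_mul]
      have := this.differentiableAt
      simpa [Function.comp_def, heq] using this
    rw [deriv_zero_of_not_differentiableAt hf, deriv_zero_of_not_differentiableAt hg, mul_zero]

/-- Unconditional iterated chain rule with nonzero scaling. -/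
lemma iteratedDeriv_comp_const_mul_ne_zero {𝕜 : Type*} [NontriviallyNormedField 𝕜]
    (n : ℕ) (f : 𝕜 → 𝕜) {c : 𝕜} (hc : c ≠ 0) :
    iteratedDeriv n (fun y => f (c * y)) = fun x => c ^ n * iteratedDeriv n f (c * x) := by
  induction n with
  | zero => simp
  | succ n ih =>
    funext x
    rw [iteratedDeriv_succ, ih]
    have : deriv (fun x => c ^ n * iteratedDeriv n f (c * x)) x
        = c ^ n * deriv (fun x => iteratedDeriv n f (c * x)) x := deriv_const_mul_field _
    rw [this, deriv_comp_const_mul_ne_zero _ hc, iteratedDeriv_succ, pow_succ]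
    ring

/-- The domain `O = {(z,w) ∈ ℂ² : z·w ≠ 1}`. -/
def Oset : Set (ℂ × ℂ) := {p | p.1 * p.2 ≠ 1}

/-- The Peschl–Minda derivative of order `(m,n)` of `f` at `(z,w)`. -/
noncomputable def PM (m n : ℕ) (f : ℂ × ℂ → ℂ) (z w : ℂ) : ℂ :=
  iteratedDeriv n (fun v => iteratedDeriv m
    (fun u => f ((z + u) / (1 + w * u), (w + v) / (1 + z * v))) 0) 0

/-- global linearisation of the pure Peschl–Minda derivative via the
coordinate change `Ψ₊(z,w) = (z/(1−zw), w)`. -/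
theorem stmt13 (U : Set (ℂ × ℂ)) (hU : IsOpen U) (hUO : U ⊆ Oset)
    (f : ℂ × ℂ → ℂ) (hf : DifferentiableOn ℂ f U) (n : ℕ)
    (z w : ℂ) (hzw : (z, w) ∈ U) :
    PM n 0 f z w
      = (1 - z * w) ^ (-(n : ℤ))
          * iteratedDeriv n (fun u => f (u / (1 + u * w), w)) (z / (1 - z * w)) := by
  have hO : z * w ≠ 1 := hUO hzw
  have hd : (1 : ℂ) - z * w ≠ 0 := sub_ne_zero.mpr (fun h => hO h.symm)
  set c : ℂ := (1 - z * w)⁻¹ with hc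
  have hcne : c ≠ 0 := inv_ne_zero hd
  -- Step 1: unfold PM
  have h1 : PM n 0 f z w
      = iteratedDeriv n (fun u => f ((z + u) / (1 + w * u), w)) 0 := by
    simp [PM, iteratedDeriv_zero]
  -- Step 2: near 0, the function agrees with g ∘ (affine map)
  set g : ℂ → ℂ := fun u => f (u / (1 + u * w), w) with hg
  have h2 : (fun u => f ((z + u) / (1 + w * u), w))
      =ᶠ[𝓝 (0 : ℂ)] (fun u => g (c * (u + z))) := by
    have hopen : IsOpen {u : ℂ | 1 + w * u ≠ 0} :=
      isOpen_ne.preimage (by continuity)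
    have hmem : (0 : ℂ) ∈ {u : ℂ | 1 + w * u ≠ 0} := by simp
    filter_upwards [hopen.mem_nhds hmem] with u hu
    have hu' : (1 : ℂ) + w * u ≠ 0 := hu
    have key : c * (u + z) / (1 + c * (u + z) * w) = (z + u) / (1 + w * u) := by
      have hden : 1 + c * (u + z) * w = c * (1 + w * u) := by
        rw [hc]; field_simp; ring
      rw [hden, mul_div_mul_left _ _ hcne, add_comm u z]
    simp only [hg, key]
  have h3 := h2.iteratedDeriv_eq n
  -- Step 3: shift and scale
  have h4 : iteratedDeriv n (fun u => g (c * (u + z))) 0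
      = c ^ n * iteratedDeriv n g (c * z) := by
    have ha := congrFun (iteratedDeriv_comp_add_const n (fun y => g (c * y)) z) 0
    calc iteratedDeriv n (fun u => g (c * (u + z))) 0
        = iteratedDeriv n (fun y => g (c * y)) (0 + z) := ha
      _ = c ^ n * iteratedDeriv n g (c * z) := by
          rw [iteratedDeriv_comp_const_mul_ne_zero n g hcne, zero_add]
  have hzc : c * z = z / (1 - z * w) := by rw [hc]; field_simp
  have hcn : c ^ n = (1 - z * w) ^ (-(n : ℤ)) := by
    rw [hc, zpow_neg, zpow_natCast, inv_pow]
  rw [h1, h3, h4, hzc, hcn]
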